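/- The Stieltjes transform m of the semicircle law, m(z) = ∫_{-2}^2 ρ_sc(x)/(x - z) dx for Im z > 0, satisfies the self-consistent equation m(z)² + z m(z) + 1 = 0. -/

import Mathlib

open Matrix MeasureTheory Asymptotics
open scoped ComplexOrder BigOperators

/-- Normalized trace `⟨M⟩ = N⁻¹ Tr M`. -/
noncomputable def ntr {N : ℕ} (M : Matrix (Fin N) (Fin N) ℂ) : ℂ :=
  (N : ℂ)⁻¹ * M.trace

/-- The square root of a positive semidefinite matrix, as `Matrix.PosSemidef.sqrt` was defined in
Mathlib (December 2024), where it has since been removed. -/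
noncomputable def Matrix.PosSemidef.sqrt {n : Type*} [Fintype n] [DecidableEq n]
    {A : Matrix n n ℂ} (hA : A.PosSemidef) : Matrix n n ℂ :=
  hA.1.eigenvectorUnitary.1 * diagonal ((↑) ∘ (√·) ∘ hA.1.eigenvalues) *
    (star hA.1.eigenvectorUnitary : Matrix n n ℂ)

/-- `|A| = (A Aᴴ)^{1/2}`. -/
noncomputable def matAbs {N : ℕ} (A : Matrix (Fin N) (Fin N) ℂ) : Matrix (Fin N) (Fin N) ℂ :=
  (Matrix.posSemidef_self_mul_conjTranspose A).sqrt

/-- Euclidean operator norm of a matrix. -/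
noncomputable def opNorm {N : ℕ} (A : Matrix (Fin N) (Fin N) ℂ) : ℝ :=
  ‖Matrix.toEuclideanCLM (𝕜 := ℂ) A‖

/-- Normalized `p`-th Schatten norm `⟨|A|^p⟩^{1/p}`. -/
noncomputable def schatten {N : ℕ} (p : ℕ) (A : Matrix (Fin N) (Fin N) ℂ) : ℝ :=
  (ntr (matAbs A ^ p)).re ^ ((p : ℝ)⁻¹)

/-- The `ℓ`-weighted `(2,p)`-Schatten norm, `p ∈ [2,∞]` (`p = ⊤` uses the operator norm). -/
noncomputable def wnorm {N : ℕ} (p : ℕ∞) (ℓ : ℝ) (A : Matrix (Fin N) (Fin N) ℂ) : ℝ :=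
  p.recTopCoe (schatten 2 A / ℓ ^ ((2:ℝ)⁻¹) + opNorm A)
    (fun q => schatten 2 A / ℓ ^ ((2:ℝ)⁻¹) + schatten q A / ℓ ^ ((q : ℝ)⁻¹))

/-- Resolvent `G(ζ) = (W - ζ)⁻¹`. -/
noncomputable def resOf {N : ℕ} (W : Matrix (Fin N) (Fin N) ℂ) (ζ : ℂ) :
    Matrix (Fin N) (Fin N) ℂ :=
  (W - ζ • (1 : Matrix (Fin N) (Fin N) ℂ))⁻¹

/-- `Im G = (G - Gᴴ)/(2i)`. -/
noncomputable def imPart {N : ℕ} (G : Matrix (Fin N) (Fin N) ℂ) : Matrix (Fin N) (Fin N) ℂ :=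
  (2 * Complex.I)⁻¹ • (G - Gᴴ)

/-- Bessel function of the first kind of order one (integral representation). -/
noncomputable def besselJ1 (x : ℝ) : ℝ :=
  (1 / Real.pi) * ∫ θ in (0:ℝ)..Real.pi, Real.cos (θ - x * Real.sin θ)

/-- Semicircle density on `[-2,2]`. -/
noncomputable def rhoSC (x : ℝ) : ℝ := (1 / (2 * Real.pi)) * Real.sqrt (4 - x ^ 2)

/-- Stieltjes transform of the semicircle law. -/
noncomputable def mSC (z : ℂ) : ℂ := ∫ x in (-2:ℝ)..2, (rhoSC x : ℂ) / (x - z)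

/-- `φ(t) = J₁(2t)/t`, with `φ(0) = 1`. -/
noncomputable def phiSC (t : ℝ) : ℝ := if t = 0 then 1 else besselJ1 (2 * t) / t

lemma ofReal_sq_helper (p m : ℝ) :
    ((p : ℂ) + m * Complex.I) ^ 2
      = ((p ^ 2 - m ^ 2 : ℝ) : ℂ) + ((2 * (p * m) : ℝ) : ℂ) * Complex.I := by
  have h := Complex.I_sq
  push_cast
  linear_combination (m : ℂ) ^ 2 * h

set_option maxHeartbeats 800000 in
lemma sqrtAux (z : ℂ) (hz : 0 < z.im) :
    ∃ t : ℂ, t ^ 2 = 4 - z ^ 2 ∧ 0 ≤ t.re ∧ t.im * z.re ≤ 0 := by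
  set w : ℂ := 4 - z ^ 2 with hw
  have hwre : w.re = 4 - z.re ^ 2 + z.im ^ 2 := by
    simp [hw, pow_two, Complex.mul_re]; ring
  have hwim : w.im = -(2 * z.re * z.im) := by
    simp [hw, pow_two, Complex.mul_im]; ring
  have habs : |w.re| ≤ ‖w‖ := Complex.abs_re_le_norm w
  have h1 : w.re ≤ ‖w‖ := (abs_le.mp habs).2
  have h2 : -‖w‖ ≤ w.re := (abs_le.mp habs).1
  set p : ℝ := Real.sqrt ((‖w‖ + w.re) / 2) with hp
  set m : ℝ := Real.sqrt ((‖w‖ - w.re) / 2) with hm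
  have hp0 : 0 ≤ p := Real.sqrt_nonneg _
  have hm0 : 0 ≤ m := Real.sqrt_nonneg _
  have hp2 : p ^ 2 = (‖w‖ + w.re) / 2 := Real.sq_sqrt (by linarith)
  have hm2 : m ^ 2 = (‖w‖ - w.re) / 2 := Real.sq_sqrt (by linarith)
  have hrediff : p ^ 2 - m ^ 2 = w.re := by rw [hp2, hm2]; ring
  have habs2 : (‖w‖) ^ 2 = w.re ^ 2 + w.im ^ 2 := by
    rw [Complex.sq_norm, Complex.normSq_apply]; ring
  have hpm : p * m = |w.im| / 2 := by
    rw [hp, hm, ← Real.sqrt_mul (by linarith)]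
    have : (‖w‖ + w.re) / 2 * ((‖w‖ - w.re) / 2) = (|w.im| / 2) ^ 2 := by
      rw [div_pow, sq_abs]; nlinarith [habs2]
    rw [this, Real.sqrt_sq (by positivity)]
  rcases lt_trichotomy z.re 0 with ha | ha | ha
  · -- w.im > 0, take t = p + m I
    have him : 2 * (p * m) = w.im := by
      rw [hpm, hwim, abs_of_pos (by nlinarith)]; ring
    refine ⟨p + m * Complex.I, ?_, by simp [hp0], ?_⟩
    · rw [ofReal_sq_helper, hrediff, him, Complex.re_add_im]
    · have : ((p:ℂ) + m * Complex.I).im = m := by simp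
      rw [this]
      have : m * z.re ≤ 0 := mul_nonpos_of_nonneg_of_nonpos hm0 ha.le
      linarith
  · -- z.re = 0 : w.im = 0, w.re > 0, abs w = w.re, m = 0
    have him : w.im = 0 := by rw [hwim, ha]; ring
    have hwrepos : 0 < w.re := by nlinarith [hwre, hz]
    have habsw : ‖w‖ = w.re := by nlinarith [habs2, norm_nonneg w]
    have hmz : m = 0 := by rw [hm, habsw]; simp
    refine ⟨(p : ℂ) + m * Complex.I, ?_, by simp [hp0], by simp [ha]⟩
    rw [ofReal_sq_helper, hrediff, hmz, show 2 * (p * 0) = w.im by rw [him]; ring,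
      Complex.re_add_im]
  · -- z.re > 0 : w.im < 0, take t = p + (-m) I
    have hwimneg : w.im < 0 := by rw [hwim]; nlinarith
    have him : 2 * (p * -m) = w.im := by
      rw [abs_of_neg hwimneg] at hpm
      linear_combination (-2 : ℝ) * hpm
    refine ⟨p + (-m : ℝ) * Complex.I, ?_, by simp [hp0], ?_⟩
    · rw [ofReal_sq_helper, show p ^ 2 - (-m) ^ 2 = w.re by rw [← hrediff]; ring,
        him, Complex.re_add_im]
    · have : ((p:ℂ) + (-m : ℝ) * Complex.I).im = -m := by simp
      rw [this]
      have : 0 ≤ m * z.re := mul_nonneg hm0 ha.le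
      linarith


lemma Nslit (z t : ℂ) (hz : 0 < z.im) (htre : 0 ≤ t.re) (htim : t.im * z.re ≤ 0) (x : ℝ) :
    (4 - (x : ℂ) * z + t * (Real.sqrt (4 - x ^ 2) : ℂ)) ∈ Complex.slitPlane := by
  set q : ℝ := Real.sqrt (4 - x ^ 2) with hqdef
  have hq0 : 0 ≤ q := Real.sqrt_nonneg _
  rw [Complex.mem_slitPlane_iff]
  by_contra h
  push_neg at h
  obtain ⟨h1, h2⟩ := h
  have hre : (4 - (x : ℂ) * z + t * (q : ℂ)).re = 4 - x * z.re + t.re * q := by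
    simp [Complex.add_re, Complex.sub_re, Complex.mul_re]
  have him : (4 - (x : ℂ) * z + t * (q : ℂ)).im = -(x * z.im) + t.im * q := by
    simp [Complex.add_im, Complex.sub_im, Complex.mul_im]
  rw [hre] at h1
  rw [him] at h2
  have k1 : (4 : ℝ) ≤ x * z.re := by nlinarith [mul_nonneg htre hq0]
  have k2 : (t.im * z.re) * q ≤ 0 := mul_nonpos_of_nonpos_of_nonneg htim hq0
  have k3 : x * z.im = t.im * q := by linarith
  have k4 : x * z.im * z.re ≤ 0 := by
    have e : x * z.im * z.re = t.im * z.re * q := by rw [k3]; ring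
    rw [e]; exact k2
  have k5 : 0 < x * z.re * z.im := mul_pos (by linarith) hz
  nlinarith [k4, k5]

lemma xz_slit (z : ℂ) (hz : 0 < z.im) (x : ℝ) : ((x : ℂ) - z) ∈ Complex.slitPlane := by
  rw [Complex.mem_slitPlane_iff]
  right
  simp only [Complex.sub_im, Complex.ofReal_im]
  intro h
  linarith

lemma hasDerivAt_FSC (z t : ℂ) (hz : 0 < z.im) (ht2 : t ^ 2 = 4 - z ^ 2)
    (htre : 0 ≤ t.re) (htim : t.im * z.re ≤ 0) (x : ℝ) (hx : x ∈ Set.Ioo (-2 : ℝ) 2) :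
    HasDerivAt (fun y : ℝ => (Real.sqrt (4 - y ^ 2) : ℂ) - z * (Real.arcsin (y / 2) : ℂ)
      - t * (Complex.log (4 - (y : ℂ) * z + t * (Real.sqrt (4 - y ^ 2) : ℂ))
          - Complex.log ((y : ℂ) - z)))
      ((Real.sqrt (4 - x ^ 2) : ℂ) / ((x : ℂ) - z)) x := by
  obtain ⟨hx1, hx2⟩ := hx
  have hx4 : 0 < 4 - x ^ 2 := by nlinarith
  set q : ℝ := Real.sqrt (4 - x ^ 2) with hqdef
  have hq2 : q ^ 2 = 4 - x ^ 2 := Real.sq_sqrt hx4.le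
  have hq0 : 0 < q := Real.sqrt_pos.mpr hx4
  have hqc : (q : ℂ) ≠ 0 := by exact_mod_cast hq0.ne'
  have hq2c : (q : ℂ) ^ 2 = 4 - (x : ℂ) ^ 2 := by exact_mod_cast congrArg Complex.ofReal hq2
  have hxz : ((x : ℂ) - z) ≠ 0 := Complex.slitPlane_ne_zero (xz_slit z hz x)
  set N : ℂ := 4 - (x : ℂ) * z + t * (q : ℂ) with hNdef
  have hNslit : N ∈ Complex.slitPlane := Nslit z t hz htre htim x
  have hN0 : N ≠ 0 := Complex.slitPlane_ne_zero hNslit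
  -- derivative of sqrt part
  have d_sqrt : HasDerivAt (fun y : ℝ => Real.sqrt (4 - y ^ 2)) (-x / q) x := by
    have h1 : HasDerivAt (fun y : ℝ => 4 - y ^ 2) (-(2 * x)) x := by
      simpa using (hasDerivAt_pow 2 x).const_sub 4
    have h2 := h1.sqrt hx4.ne'
    convert h2 using 1
    rw [← hqdef]
    field_simp
  -- derivative of arcsin part
  have d_arcsin : HasDerivAt (fun y : ℝ => Real.arcsin (y / 2)) (1 / q) x := by
    have h1 : x / 2 ≠ -1 := by intro h; nlinarith [h]
    have h2 : x / 2 ≠ 1 := by intro h; nlinarith [h]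
    have h3 : HasDerivAt (fun y : ℝ => Real.arcsin (y / 2))
        (1 / Real.sqrt (1 - (x / 2) ^ 2) * (1 / 2)) x := by
      simpa [Function.comp_def] using
        (Real.hasDerivAt_arcsin h1 h2).comp x ((hasDerivAt_id x).div_const 2)
    have h4 : Real.sqrt (1 - (x / 2) ^ 2) = q / 2 := by
      rw [show 1 - (x / 2) ^ 2 = (4 - x ^ 2) * (1 / 2) ^ 2 by ring, Real.sqrt_mul hx4.le,
        Real.sqrt_sq (by norm_num : (0:ℝ) ≤ 1 / 2)]
      rw [← hqdef]; ring
    convert h3 using 1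
    rw [h4]; field_simp
  have hA : HasDerivAt (fun y : ℝ => ((y : ℝ) : ℂ)) ((1 : ℝ) : ℂ) x := (hasDerivAt_id x).ofReal_comp
  -- derivative of N
  have dN : HasDerivAt (fun y : ℝ => 4 - (y : ℂ) * z + t * (Real.sqrt (4 - y ^ 2) : ℂ))
      (-((1:ℂ) * z) + t * ((-x / q : ℝ) : ℂ)) x :=
    ((hA.mul_const z).const_sub 4).add (d_sqrt.ofReal_comp.const_mul t)
  have dlogN := dN.clog_real (by rw [← hNdef]; exact hNslit)
  have dlogxz : HasDerivAt (fun y : ℝ => Complex.log ((y : ℂ) - z))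
      (((1:ℝ) : ℂ) / ((x : ℂ) - z)) x := (hA.sub_const z).clog_real (xz_slit z hz x)
  have total := ((d_sqrt.ofReal_comp).sub (d_arcsin.ofReal_comp.const_mul z)).sub
    ((dlogN.sub dlogxz).const_mul t)
  -- now rewrite the derivative value
  have key : (-((1:ℂ) * z) + t * ((-x / q : ℝ) : ℂ)) / N - ((1:ℝ) : ℂ) / ((x : ℂ) - z)
      = -t / ((q : ℂ) * ((x : ℂ) - z)) := by
    have e1 : (-((1:ℂ) * z) + t * ((-x / q : ℝ) : ℂ)) = (-(z * q) - t * x) / (q : ℂ) := by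
      push_cast
      field_simp
      ring
    rw [e1, div_div, Complex.ofReal_one]
    rw [div_sub_div _ _ (mul_ne_zero hqc hN0) hxz, div_eq_div_iff
      (mul_ne_zero (mul_ne_zero hqc hN0) hxz) (mul_ne_zero hqc hxz)]
    linear_combination (-t * ((x:ℂ) - z) * (q:ℂ)) * hq2c + ((q:ℂ) ^ 2 * ((x:ℂ) - z)) * ht2
  have final : (((-x / q : ℝ) : ℂ) - z * ((1 / q : ℝ) : ℂ)
        - t * ((-((1:ℂ) * z) + t * ((-x / q : ℝ) : ℂ)) / N - ((1:ℝ) : ℂ) / ((x : ℂ) - z)))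
      = (q : ℂ) / ((x : ℂ) - z) := by
    rw [key]
    push_cast
    field_simp
    linear_combination ht2 - hq2c
  rw [← final]
  exact total

lemma log_neg_of_im_pos (w : ℂ) (hw : 0 < w.im) :
    Complex.log (-w) = Complex.log w - Real.pi * Complex.I := by
  have h1 : ‖-w‖ = ‖w‖ := by simp
  have h2 := Complex.arg_neg_eq_arg_sub_pi_of_im_pos hw
  rw [Complex.log, Complex.log, h1, h2]
  push_cast
  ring

lemma log_two_mul_helper (w : ℂ) (hw : w ≠ 0) :
    Complex.log (((2:ℝ) : ℂ) * w) = (Real.log 2 : ℂ) + Complex.log w :=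
  Complex.log_ofReal_mul two_pos hw

lemma contFSC (z t : ℂ) (hz : 0 < z.im) (htre : 0 ≤ t.re) (htim : t.im * z.re ≤ 0) :
    ContinuousOn (fun y : ℝ => (Real.sqrt (4 - y ^ 2) : ℂ) - z * (Real.arcsin (y / 2) : ℂ)
      - t * (Complex.log (4 - (y : ℂ) * z + t * (Real.sqrt (4 - y ^ 2) : ℂ))
          - Complex.log ((y : ℂ) - z))) (Set.Icc (-2 : ℝ) 2) := by
  have c0 : Continuous fun y : ℝ => (Real.sqrt (4 - y ^ 2) : ℂ) :=
    Complex.continuous_ofReal.comp (Real.continuous_sqrt.comp (by continuity))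
  have c1 : Continuous fun y : ℝ => z * (Real.arcsin (y / 2) : ℂ) :=
    continuous_const.mul (Complex.continuous_ofReal.comp
      (Real.continuous_arcsin.comp (by continuity)))
  have cN : Continuous fun y : ℝ => 4 - (y : ℂ) * z + t * (Real.sqrt (4 - y ^ 2) : ℂ) := by
    apply Continuous.add
    · exact continuous_const.sub (Complex.continuous_ofReal.mul continuous_const)
    · exact continuous_const.mul c0
  have c2 : ContinuousOn (fun y : ℝ =>
      Complex.log (4 - (y : ℂ) * z + t * (Real.sqrt (4 - y ^ 2) : ℂ))) (Set.Icc (-2 : ℝ) 2) :=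
    ContinuousOn.clog cN.continuousOn fun x _ => Nslit z t hz htre htim x
  have c3 : ContinuousOn (fun y : ℝ => Complex.log ((y : ℂ) - z)) (Set.Icc (-2 : ℝ) 2) :=
    ContinuousOn.clog ((Complex.continuous_ofReal.sub continuous_const).continuousOn)
      fun x _ => xz_slit z hz x
  exact (c0.continuousOn.sub c1.continuousOn).sub (ContinuousOn.mul continuousOn_const (c2.sub c3))

lemma integral_value (z t : ℂ) (hz : 0 < z.im) (ht2 : t ^ 2 = 4 - z ^ 2)
    (htre : 0 ≤ t.re) (htim : t.im * z.re ≤ 0) :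
    ∫ x in (-2:ℝ)..2, (Real.sqrt (4 - x ^ 2) : ℂ) / ((x : ℂ) - z)
      = -z * Real.pi + Complex.I * Real.pi * t := by
  have hcont := contFSC z t hz htre htim
  have hint : IntervalIntegrable (fun x : ℝ => (Real.sqrt (4 - x ^ 2) : ℂ) / ((x : ℂ) - z))
      MeasureTheory.volume (-2 : ℝ) 2 := by
    apply ContinuousOn.intervalIntegrable
    apply ContinuousOn.div
    · exact (Complex.continuous_ofReal.comp (Real.continuous_sqrt.comp
        (by continuity))).continuousOn
    · exact (Complex.continuous_ofReal.sub continuous_const).continuousOn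
    · exact fun x _ => Complex.slitPlane_ne_zero (xz_slit z hz x)
  have hFTC := intervalIntegral.integral_eq_sub_of_hasDerivAt_of_le (by norm_num) hcont
    (fun x hx => hasDerivAt_FSC z t hz ht2 htre htim x hx) hint
  rw [hFTC]
  have h2z : (2 : ℂ) - z ≠ 0 := by
    intro h
    have := congrArg Complex.im h
    simp at this
    linarith
  have h2z' : (2 : ℂ) + z ≠ 0 := by
    intro h
    have := congrArg Complex.im h
    simp at this
    linarith
  have e1 : (4 : ℝ) - (2:ℝ) ^ 2 = 0 := by norm_num
  have e2 : (4 : ℝ) - (-2:ℝ) ^ 2 = 0 := by norm_num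
  rw [e1, e2, Real.sqrt_zero, show (2:ℝ)/2 = 1 by norm_num, show (-2:ℝ)/2 = -1 by norm_num,
    Real.arcsin_one, Real.arcsin_neg_one]
  have eN2 : (4 : ℂ) - ((2:ℝ) : ℂ) * z + t * ((0:ℝ) : ℂ) = ((2:ℝ) : ℂ) * ((2:ℂ) - z) := by
    push_cast; ring
  have eN2' : (4 : ℂ) - ((-2:ℝ) : ℂ) * z + t * ((0:ℝ) : ℂ) = ((2:ℝ) : ℂ) * ((2:ℂ) + z) := by
    push_cast; ring
  have ex2 : ((2:ℝ) : ℂ) - z = (2:ℂ) - z := by push_cast; ring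
  have ex2' : ((-2:ℝ) : ℂ) - z = -((2:ℂ) + z) := by push_cast; ring
  rw [eN2, eN2', ex2, ex2', log_two_mul_helper _ h2z, log_two_mul_helper _ h2z',
    log_neg_of_im_pos ((2:ℂ) + z) (by simp [hz])]
  push_cast
  ring

/-- the semicircle Stieltjes transform satisfies `m² + zm + 1 = 0`. -/
theorem mSC_selfconsistent (z : ℂ) (hz : 0 < z.im) :
    mSC z ^ 2 + z * mSC z + 1 = 0 := by
  obtain ⟨t, ht2, htre, htim⟩ := sqrtAux z hz
  have hval := integral_value z t hz ht2 htre htim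
  have hm : mSC z = (Complex.I * t - z) / 2 := by
    rw [mSC]
    have hi : ∀ x : ℝ, (rhoSC x : ℂ) / ((x : ℂ) - z)
        = ((1 / (2 * Real.pi) : ℝ) : ℂ) * ((Real.sqrt (4 - x ^ 2) : ℂ) / ((x : ℂ) - z)) := by
      intro x; rw [rhoSC]; push_cast; ring
    simp_rw [hi]
    rw [intervalIntegral.integral_const_mul, hval]
    have hpi : (Real.pi : ℂ) ≠ 0 := Complex.ofReal_ne_zero.mpr Real.pi_ne_zero
    push_cast
    field_simp
    ring
  rw [hm]
  linear_combination (-(1:ℂ)/4) * ht2 + (t ^ 2 / 4) * Complex.I_sq
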